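/- Let y ∈ ℝⁿ, Φ ∈ ℝ^{n×p}, c ≥ 0, and let 𝒰₁ = {ΔΦ ∈ ℝ^{n×p} : ‖ΔΦ‖₂ ≤ c‖β‖₂} (operator norm, depending on β). Then for every β ∈ ℝᵖ with y ≠ Φβ, max_{ΔΦ ∈ 𝒰₁} ‖y − (Φ + ΔΦ)β‖₂ = ‖y − Φβ‖₂ + c‖β‖₂². Consequently the robust regression problem min_β max_{ΔΦ ∈ 𝒰₁} ‖y − (Φ+ΔΦ)β‖₂ is equivalent to the L2-regularized problem min_β { ‖y − Φβ‖₂ + c‖β‖₂² }. -/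

import Mathlib

/-- For the uncertainty set `𝒰₁(β) = {ΔΦ : ‖ΔΦ‖₂ ≤ c‖β‖₂}` (operator
norm), for every `β` with `y ≠ Φβ` the worst-case loss
`max_{ΔΦ ∈ 𝒰₁} ‖y − (Φ+ΔΦ)β‖₂` equals `‖y − Φβ‖₂ + c‖β‖₂²` (the maximum is
attained). Consequently, when `y ≠ Φβ` for all `β`, the robust regression problem
`min_β max_{ΔΦ ∈ 𝒰₁} ‖y − (Φ+ΔΦ)β‖₂` is equivalent to the `L2`-regularized
problem `min_β { ‖y − Φβ‖₂ + c‖β‖₂² }` (same minimizers and values). -/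
theorem stmt_3 (n p : ℕ) (y : EuclideanSpace ℝ (Fin n))
    (Φ : EuclideanSpace ℝ (Fin p) →L[ℝ] EuclideanSpace ℝ (Fin n))
    (c : ℝ) (hc : 0 ≤ c) :
    (∀ β : EuclideanSpace ℝ (Fin p), y ≠ Φ β →
      IsGreatest ((fun D : EuclideanSpace ℝ (Fin p) →L[ℝ] EuclideanSpace ℝ (Fin n) =>
          ‖y - (Φ + D) β‖) '' {D | ‖D‖ ≤ c * ‖β‖})
        (‖y - Φ β‖ + c * ‖β‖ ^ 2)) ∧
    ((∀ β : EuclideanSpace ℝ (Fin p), y ≠ Φ β) →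
      ∀ β₀ : EuclideanSpace ℝ (Fin p),
        ((∀ β, sSup ((fun D : EuclideanSpace ℝ (Fin p) →L[ℝ] EuclideanSpace ℝ (Fin n) =>
              ‖y - (Φ + D) β₀‖) '' {D | ‖D‖ ≤ c * ‖β₀‖}) ≤
            sSup ((fun D : EuclideanSpace ℝ (Fin p) →L[ℝ] EuclideanSpace ℝ (Fin n) =>
              ‖y - (Φ + D) β‖) '' {D | ‖D‖ ≤ c * ‖β‖})) ↔
          (∀ β, ‖y - Φ β₀‖ + c * ‖β₀‖ ^ 2 ≤ ‖y - Φ β‖ + c * ‖β‖ ^ 2))) := by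
  have key : ∀ β : EuclideanSpace ℝ (Fin p), y ≠ Φ β →
      IsGreatest ((fun D : EuclideanSpace ℝ (Fin p) →L[ℝ] EuclideanSpace ℝ (Fin n) =>
          ‖y - (Φ + D) β‖) '' {D | ‖D‖ ≤ c * ‖β‖})
        (‖y - Φ β‖ + c * ‖β‖ ^ 2) := by
    intro β hβ
    set r : EuclideanSpace ℝ (Fin n) := y - Φ β with hr
    have hr0 : r ≠ 0 := sub_ne_zero.mpr hβ
    have hrn : (0:ℝ) < ‖r‖ := norm_pos_iff.mpr hr0
    constructor
    · -- membership: exhibit the maximizer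
      set D : EuclideanSpace ℝ (Fin p) →L[ℝ] EuclideanSpace ℝ (Fin n) :=
        (innerSL ℝ β).smulRight ((-(c / ‖r‖)) • r) with hD
      refine ⟨D, ?_, ?_⟩
      · -- ‖D‖ ≤ c‖β‖
        show ‖D‖ ≤ c * ‖β‖
        refine ContinuousLinearMap.opNorm_le_bound _ (by positivity) fun x => ?_
        have h1 : ‖D x‖ = |(inner ℝ β x : ℝ)| * ‖(-(c / ‖r‖)) • r‖ := by
          simp [hD, norm_smul, mul_comm]
        have h2 : |(inner ℝ β x : ℝ)| ≤ ‖β‖ * ‖x‖ := by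
          simpa using abs_real_inner_le_norm β x
        have h3 : ‖(-(c / ‖r‖)) • r‖ = c := by
          rw [norm_smul, Real.norm_eq_abs, abs_neg, abs_of_nonneg (by positivity)]
          field_simp
        rw [h1, h3]
        nlinarith [norm_nonneg x]
      · -- value
        have hDβ : D β = -((c * ‖β‖ ^ 2 / ‖r‖) • r) := by
          simp only [hD, ContinuousLinearMap.smulRight_apply, innerSL_apply_apply,
            real_inner_self_eq_norm_sq]
          rw [smul_smul, ← neg_smul]
          ring_nf
        show ‖y - (Φ + D) β‖ = ‖y - Φ β‖ + c * ‖β‖ ^ 2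
        have : y - (Φ + D) β = (1 + c * ‖β‖ ^ 2 / ‖r‖) • r := by
          rw [ContinuousLinearMap.add_apply, hDβ, add_smul, one_smul]
          rw [hr]
          abel
        rw [this, norm_smul, Real.norm_eq_abs, abs_of_nonneg (by positivity), ← hr]
        field_simp
    · -- upper bound
      rintro v ⟨D, hDmem, rfl⟩
      have h1 : y - (Φ + D) β = r - D β := by
        simp only [ContinuousLinearMap.add_apply, hr]; abel
      calc ‖y - (Φ + D) β‖ ≤ ‖r‖ + ‖D β‖ := by rw [h1]; exact norm_sub_le _ _
        _ ≤ ‖r‖ + ‖D‖ * ‖β‖ := by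
            have := D.le_opNorm β; linarith
        _ ≤ ‖y - Φ β‖ + c * ‖β‖ ^ 2 := by
            have hDle : ‖D‖ ≤ c * ‖β‖ := hDmem
            have := mul_le_mul_of_nonneg_right hDle (norm_nonneg β)
            rw [← hr]
            nlinarith
  refine ⟨key, fun hall β₀ => ?_⟩
  have hsup : ∀ β : EuclideanSpace ℝ (Fin p),
      sSup ((fun D : EuclideanSpace ℝ (Fin p) →L[ℝ] EuclideanSpace ℝ (Fin n) =>
          ‖y - (Φ + D) β‖) '' {D | ‖D‖ ≤ c * ‖β‖}) = ‖y - Φ β‖ + c * ‖β‖ ^ 2 :=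
    fun β => (key β (hall β)).csSup_eq
  constructor
  · intro h β; have := h β; rwa [hsup, hsup] at this
  · intro h β; rw [hsup, hsup]; exact h β
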